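/- Let Y be a finite nontrivial minimal obstacle between distinct points y1, y2 in R^d with y1, y2 ∉ aff(Y). Then there exist p ∈ R^d and q ∈ R with p·y1 > q, p·y2 < q, and p·x = q for all x ∈ aff(Y). -/
import Mathlib


/-- If `Y` is a nontrivial minimal obstacle between `y1` and `y2`, neither of
which lies in the affine hull of `Y`, then there is a hyperplane containing
`aff Y` that strictly separates `y1` from `y2`. -/
theorem stmt_9 (d : ℕ) (y1 y2 : Fin d → ℝ) (hne : y1 ≠ y2) (Y : Finset (Fin d → ℝ))
    (hobs : (convexHull ℝ (Y : Set (Fin d → ℝ)) ∩ convexHull ℝ ({y1, y2} : Set (Fin d → ℝ))).Nonempty)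
    (h1 : y1 ∉ convexHull ℝ (Y : Set (Fin d → ℝ)))
    (h2 : y2 ∉ convexHull ℝ (Y : Set (Fin d → ℝ)))
    (hmin : ∀ y ∈ Y,
      convexHull ℝ ((Y.erase y : Finset (Fin d → ℝ)) : Set (Fin d → ℝ)) ∩
        convexHull ℝ ({y1, y2} : Set (Fin d → ℝ)) = ∅)
    (ha1 : y1 ∉ (affineSpan ℝ (Y : Set (Fin d → ℝ)) : Set (Fin d → ℝ)))
    (ha2 : y2 ∉ (affineSpan ℝ (Y : Set (Fin d → ℝ)) : Set (Fin d → ℝ))) :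
    ∃ (p : Fin d → ℝ) (q : ℝ),
      (∑ i, p i * y1 i) > q ∧ (∑ i, p i * y2 i) < q ∧
      ∀ x ∈ (affineSpan ℝ (Y : Set (Fin d → ℝ)) : Set (Fin d → ℝ)), (∑ i, p i * x i) = q := by
  obtain ⟨z, hzY, hzseg⟩ := hobs
  rw [convexHull_pair] at hzseg
  obtain ⟨s, t, hs, ht, hst, hz⟩ := hzseg
  have hs0 : s ≠ 0 := by
    rintro rfl
    apply h2
    have h : t = 1 := by linarith
    have : z = y2 := by rw [← hz, h]; simp
    rwa [← this]
  have ht0 : t ≠ 0 := by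
    rintro rfl
    apply h1
    have h : s = 1 := by linarith
    have : z = y1 := by rw [← hz, h]; simp
    rwa [← this]
  obtain ⟨a, haY⟩ : ∃ a, a ∈ Y := by
    by_contra h
    push_neg at h
    rw [Finset.eq_empty_of_forall_notMem h] at hzY
    simp at hzY
  have haS : a ∈ affineSpan ℝ (Y : Set (Fin d → ℝ)) :=
    subset_affineSpan ℝ _ (by exact_mod_cast haY)
  set V : Submodule ℝ (Fin d → ℝ) := (affineSpan ℝ (Y : Set (Fin d → ℝ))).direction with hV
  have hmemV : ∀ x : Fin d → ℝ, (x - a ∈ V) ↔ x ∈ affineSpan ℝ (Y : Set (Fin d → ℝ)) := by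
    intro x
    exact AffineSubspace.vsub_right_mem_direction_iff_mem haS x
  have hw : (y1 - a) ∉ V := fun h => ha1 ((hmemV y1).mp h)
  obtain ⟨f, hf0, hfV⟩ := V.exists_dual_map_eq_bot_of_notMem hw inferInstance
  have hfV' : ∀ v ∈ V, f v = 0 := by
    intro v hv
    have : f v ∈ V.map f := Submodule.mem_map_of_mem hv
    rwa [hfV, Submodule.mem_bot] at this
  set g : Module.Dual ℝ (Fin d → ℝ) := (f (y1 - a))⁻¹ • f with hg
  have hgw : g (y1 - a) = 1 := by
    rw [hg]
    simp only [LinearMap.smul_apply, smul_eq_mul]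
    exact inv_mul_cancel₀ hf0
  have hgV : ∀ v ∈ V, g v = 0 := by
    intro v hv
    simp [hg, hfV' v hv]
  set p : Fin d → ℝ := fun i => g (fun j => if i = j then 1 else 0) with hp
  have hsum : ∀ x : Fin d → ℝ, (∑ i, p i * x i) = g x := by
    intro x
    rw [LinearMap.pi_apply_eq_sum_univ g x]
    exact Finset.sum_congr rfl fun i _ => by rw [smul_eq_mul, mul_comm]
  set q : ℝ := g a with hq
  have hspan : ∀ x ∈ (affineSpan ℝ (Y : Set (Fin d → ℝ)) : Set (Fin d → ℝ)),
      (∑ i, p i * x i) = q := by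
    intro x hx
    rw [hsum]
    have h0 : g (x - a) = 0 := hgV _ ((hmemV x).mpr hx)
    rw [map_sub] at h0
    linarith
  have hgy1 : g y1 = q + 1 := by
    have := hgw
    rw [map_sub] at this
    linarith
  have hzspan : z ∈ (affineSpan ℝ (Y : Set (Fin d → ℝ)) : Set (Fin d → ℝ)) :=
    convexHull_subset_affineSpan _ hzY
  have hzq : s * g y1 + t * g y2 = q := by
    have hh := hspan z hzspan
    rw [hsum] at hh
    rw [← hz, map_add, map_smul, map_smul, smul_eq_mul, smul_eq_mul] at hh
    exact hh
  have hts : 0 < t := lt_of_le_of_ne ht (Ne.symm ht0)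
  have hss : 0 < s := lt_of_le_of_ne hs (Ne.symm hs0)
  refine ⟨p, q, ?_, ?_, hspan⟩
  · rw [hsum, hgy1]; linarith
  · rw [hsum]
    by_contra hcon
    push_neg at hcon
    have hmul : t * q ≤ t * g y2 := mul_le_mul_of_nonneg_left hcon ht
    have hsy1 : s * g y1 = s * q + s := by rw [hgy1]; ring
    have hq2 : s * q + t * q = q := by rw [← add_mul, hst, one_mul]
    linarith [hzq, hmul, hsy1, hq2, hss]
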